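/- arXiv:2408.16594 — 2 statements merged into one kernel-verified Lean document; each statement's English description precedes it below -/
import Mathlib

section
/- Assume additionally that M = AᵀΣ_obs⁻¹A is invertible, and let λ ∈ ℝ^d have positive entries. For w ∈ ℝ^d with strictly positive entries define F(w) = −Σ_{i=1}^d λ_i w_i − (1/2)·log det(Λ_w^{1/2} M Λ_w^{1/2} + I) + (1/2)·yᵀΣ_obs⁻¹A Λ_w^{1/2}(Λ_w^{1/2} M Λ_w^{1/2} + I)⁻¹ Λ_w^{1/2} AᵀΣ_obs⁻¹y (the log unnormalized posterior mixing density for the Laplace prior). Then for every such w and every index i, the i-th partial derivative of F at w exists and equals −λ_i − (1/2)·[(M⁻¹ + Λ_w)⁻¹]_{ii} + (1/2)·z_i², where z = (M⁻¹ + Λ_w)⁻¹ M⁻¹ AᵀΣ_obs⁻¹ y. (Gradient formula (C.2) of the log posterior mixing density.) -/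
open Matrix MeasureTheory Real
open Topology Filter

set_option maxHeartbeats 1000000

/-- The log unnormalized posterior mixing density for the Laplace prior:
`F(w) = −∑ᵢ λᵢwᵢ − ½ log det(Λ_w^{1/2} M Λ_w^{1/2} + I)
        + ½ yᵀΣ_obs⁻¹A Λ_w^{1/2}(Λ_w^{1/2} M Λ_w^{1/2} + I)⁻¹Λ_w^{1/2} AᵀΣ_obs⁻¹ y`,
where `M = AᵀΣ_obs⁻¹A`, `Λ_w = diag(w)` and `Λ_w^{1/2} = diag(√w)`. -/
noncomputable def logMixPosterior {d m : ℕ}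
    (A : Matrix (Fin m) (Fin d) ℝ) (Sobs : Matrix (Fin m) (Fin m) ℝ)
    (lam : Fin d → ℝ) (y : Fin m → ℝ) (w : Fin d → ℝ) : ℝ :=
  -(∑ i, lam i * w i)
    - (1 / 2) * Real.log ((Matrix.diagonal (fun i => Real.sqrt (w i))
        * (Aᵀ * Sobs⁻¹ * A) * Matrix.diagonal (fun i => Real.sqrt (w i)) + 1).det)
    + (1 / 2) * (y ⬝ᵥ (Sobs⁻¹ * A * Matrix.diagonal (fun i => Real.sqrt (w i))
        * (Matrix.diagonal (fun i => Real.sqrt (w i)) * (Aᵀ * Sobs⁻¹ * A)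
            * Matrix.diagonal (fun i => Real.sqrt (w i)) + 1)⁻¹
        * Matrix.diagonal (fun i => Real.sqrt (w i)) * Aᵀ * Sobs⁻¹).mulVec y)

section AuxLemmas

variable {d : ℕ}

private lemma EXE_aux (N : Matrix (Fin d) (Fin d) ℝ) (i : Fin d) :
    Matrix.single i i (1:ℝ) * N * Matrix.single i i 1
      = N i i • Matrix.single i i 1 := by
  ext a b
  by_cases hb : b = i
  · subst hb
    by_cases ha : a = b
    · subst ha
      simp
    · rw [Matrix.mul_single_apply_same]
      rw [Matrix.single_mul_apply_of_ne _ _ _ _ _ ha]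
      simp [Matrix.single_apply_of_row_ne (Ne.symm ha)]
  · rw [Matrix.mul_single_apply_of_ne _ _ _ _ _ hb]
    rw [Matrix.smul_apply,
      Matrix.single_apply_of_col_ne i a (fun h => hb h.symm) 1]
    simp

private lemma smulNE_aux (s : ℝ) (N : Matrix (Fin d) (Fin d) ℝ) (i : Fin d) :
    s • (N * Matrix.single i i 1) =
      Matrix.replicateCol Unit (fun j => s * N j i) * Matrix.replicateRow Unit (Pi.single i (1:ℝ)) := by
  ext j k
  rw [Matrix.mul_apply]
  simp only [Matrix.replicateCol_apply, Matrix.replicateRow_apply, Finset.univ_unique, Finset.sum_const,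
    Finset.card_singleton, one_smul, Matrix.smul_apply, smul_eq_mul]
  by_cases hk : k = i
  · subst hk; simp
  · rw [Matrix.mul_single_apply_of_ne _ _ _ _ _ hk]
    simp [Pi.single_apply, hk]

private lemma det_one_add_aux (s : ℝ) (N : Matrix (Fin d) (Fin d) ℝ) (i : Fin d) :
    (1 + s • (N * Matrix.single i i 1)).det = 1 + s * N i i := by
  rw [smulNE_aux, Matrix.det_one_add_replicateCol_mul_replicateRow]
  simp [single_dotProduct]

end AuxLemmas

/-- Gradient formula (C.2) of the log posterior mixing density: on the positive
orthant, the `i`-th partial derivative of `F` exists and equals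
`−λᵢ − ½ [(M⁻¹ + Λ_w)⁻¹]ᵢᵢ + ½ zᵢ²` with `z = (M⁻¹ + Λ_w)⁻¹ M⁻¹ AᵀΣ_obs⁻¹ y`. -/
theorem gradient_log_posterior_mixing
    (d m : ℕ) (hd : 0 < d) (hm : 0 < m)
    (A : Matrix (Fin m) (Fin d) ℝ)
    (Sobs : Matrix (Fin m) (Fin m) ℝ) (hSobs : Sobs.PosDef)
    (y : Fin m → ℝ)
    (hM : IsUnit (Aᵀ * Sobs⁻¹ * A))
    (lam : Fin d → ℝ) (hlam : ∀ i, 0 < lam i) :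
    ∀ w : Fin d → ℝ, (∀ i, 0 < w i) → ∀ i : Fin d,
      HasDerivAt (fun t : ℝ => logMixPosterior A Sobs lam y (Function.update w i t))
        (-lam i
          - (1 / 2) * (((Aᵀ * Sobs⁻¹ * A)⁻¹ + Matrix.diagonal w)⁻¹ i i)
          + (1 / 2) * ((((Aᵀ * Sobs⁻¹ * A)⁻¹ + Matrix.diagonal w)⁻¹
              * (Aᵀ * Sobs⁻¹ * A)⁻¹ * Aᵀ * Sobs⁻¹).mulVec y i) ^ 2)
        (w i) := by
  intro w hw i
  classical
  -- basic symmetry and positivity facts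
  have hSinv : Sobs⁻¹.PosDef := hSobs.inv
  have hSsym : Sobs⁻¹ᵀ = Sobs⁻¹ := by
    have h := hSinv.isHermitian
    rw [Matrix.IsHermitian, Matrix.conjTranspose_eq_transpose_of_trivial] at h
    exact h
  set M := Aᵀ * Sobs⁻¹ * A with hMdef
  have hMsym : Mᵀ = M := by
    rw [hMdef, Matrix.transpose_mul, Matrix.transpose_mul, Matrix.transpose_transpose,
      hSsym, Matrix.mul_assoc]
  have hMpsd : M.PosSemidef := by
    have h := hSinv.posSemidef.conjTranspose_mul_mul_same A
    rw [Matrix.conjTranspose_eq_transpose_of_trivial] at h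
    rw [hMdef]
    exact h
  have hMdet : IsUnit M.det := (Matrix.isUnit_iff_isUnit_det _).mp hM
  have hMMinv : M * M⁻¹ = 1 := Matrix.mul_nonsing_inv _ hMdet
  have hMinvM : M⁻¹ * M = 1 := Matrix.nonsing_inv_mul _ hMdet
  have hMpos : M.PosDef := by
    exact hMpsd.posDef_iff_isUnit.mpr hM
  have hMinvPos : M⁻¹.PosDef := hMpos.inv
  have hDiagPos : (Matrix.diagonal w).PosDef := Matrix.posDef_diagonal_iff.mpr hw
  set P := M⁻¹ + Matrix.diagonal w with hPdef
  have hPpos : P.PosDef := hMinvPos.add_posSemidef hDiagPos.posSemidef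
  have hPdet : IsUnit P.det := (Matrix.isUnit_iff_isUnit_det _).mp hPpos.isUnit
  set N := P⁻¹ with hNdef
  have hPN : P * N = 1 := Matrix.mul_nonsing_inv _ hPdet
  have hNP : N * P = 1 := Matrix.nonsing_inv_mul _ hPdet
  have hPsym : Pᵀ = P := by
    rw [hPdef, Matrix.transpose_add, Matrix.diagonal_transpose, Matrix.transpose_nonsing_inv,
      hMsym]
  have hNsym : Nᵀ = N := by
    rw [hNdef, Matrix.transpose_nonsing_inv, hPsym]
  set b := (Aᵀ * Sobs⁻¹) *ᵥ y with hbdef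
  set v := (Matrix.diagonal w) *ᵥ b with hvdef
  set c := N i i with hcdef
  set a := (N *ᵥ v) i with hadef
  set q0 := v ⬝ᵥ (N *ᵥ v) with hq0def
  set L0 := b ⬝ᵥ v with hL0def
  set wi := w i with hwidef
  -- the i-th entry of z
  have hzi : ((N * M⁻¹ * Aᵀ * Sobs⁻¹) *ᵥ y) i = b i - a := by
    have hMi : M⁻¹ = P - Matrix.diagonal w := by rw [hPdef, add_sub_cancel_right]
    have h1 : N * M⁻¹ = 1 - N * Matrix.diagonal w := by
      rw [hMi, Matrix.mul_sub, hNP]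
    have h2 : N * M⁻¹ * Aᵀ * Sobs⁻¹ = N * M⁻¹ * (Aᵀ * Sobs⁻¹) := by
      rw [Matrix.mul_assoc]
    rw [h2, h1, Matrix.sub_mul, Matrix.one_mul, Matrix.sub_mulVec]
    have h3 : (N * Matrix.diagonal w * (Aᵀ * Sobs⁻¹)) *ᵥ y = N *ᵥ v := by
      rw [hvdef, Matrix.mulVec_mulVec, hbdef, Matrix.mulVec_mulVec]
    rw [h3]
    simp only [Pi.sub_apply]
    rfl
  clear_value M P N b v c a q0 L0 wi
  set K := M.det * P.det with hKdef
  set C1 := -(∑ j, lam j * w j) + lam i * wi with hC1def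
  set g : ℝ → ℝ := fun t =>
    C1 - lam i * t
      - (1/2) * Real.log (K * (1 + (t - wi) * c))
      + (1/2) * (L0 + (t - wi) * (b i)^2
          - (q0 + 2*(t - wi)*(b i)*a + (t - wi)^2*(b i)^2*c)
          + (t - wi)*(a + (t - wi)*(b i)*c)^2 / (1 + (t - wi)*c)) with hgdef
  have hK0 : 0 < K := mul_pos hMpos.det_pos hPpos.det_pos
  have hds : HasDerivAt (fun t : ℝ => t - wi) 1 wi := (hasDerivAt_id wi).sub_const wi
  have hden : HasDerivAt (fun t : ℝ => 1 + (t - wi) * c) c wi := by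
    simpa using (hds.mul_const c).const_add 1
  have hlog : HasDerivAt (fun t : ℝ => Real.log (K * (1 + (t - wi) * c))) c wi := by
    have h0 : HasDerivAt (fun t : ℝ => K * (1 + (t - wi) * c)) (K * c) wi := by
      simpa using hden.const_mul K
    have h1 := h0.log (by simpa using hK0.ne')
    convert h1 using 1
    rw [sub_self, zero_mul, add_zero, mul_one]
    field_simp
  have h1d : HasDerivAt (fun t : ℝ => L0 + (t - wi) * (b i)^2) ((b i)^2) wi := by
    simpa using (hds.mul_const ((b i)^2)).const_add L0
  have h2d : HasDerivAt (fun t : ℝ => q0 + 2*(t - wi)*(b i)*a + (t - wi)^2*(b i)^2*c)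
      (2*(b i)*a) wi := by
    have hA : HasDerivAt (fun t : ℝ => 2*(t - wi)*(b i)*a) (2*(b i)*a) wi := by
      have := ((hds.const_mul 2).mul_const (b i)).mul_const a
      simpa [mul_assoc, mul_comm, mul_left_comm] using this
    have hB : HasDerivAt (fun t : ℝ => (t - wi)^2*(b i)^2*c) 0 wi := by
      have := ((hds.pow 2).mul_const ((b i)^2)).mul_const c
      simpa using this
    simpa [Pi.add_def] using (hA.const_add q0).add hB
  have h3d : HasDerivAt (fun t : ℝ => (t - wi)*(a + (t - wi)*(b i)*c)^2) (a^2) wi := by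
    have hin : HasDerivAt (fun t : ℝ => a + (t - wi)*(b i)*c) ((b i)*c) wi := by
      simpa using ((hds.mul_const (b i)).mul_const c).const_add a
    have := hds.mul (hin.pow 2)
    simpa [Pi.mul_def, Pi.pow_def] using this
  have h4d : HasDerivAt (fun t : ℝ => (t - wi)*(a + (t - wi)*(b i)*c)^2 / (1 + (t - wi)*c))
      (a^2) wi := by
    have := h3d.div hden (by norm_num)
    simpa [Pi.div_def] using this
  have hgd : HasDerivAt g (-lam i - (1/2)*c + (1/2)*((b i) - a)^2) wi := by
    have hpoly : HasDerivAt (fun t : ℝ => C1 - lam i * t) (-lam i) wi := by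
      simpa using ((hasDerivAt_id wi).const_mul (lam i)).const_sub C1
    have hsum1 := (hpoly.sub (hlog.const_mul (1/2))).add
      (((h1d.sub h2d).add h4d).const_mul (1/2))
    rw [hgdef]
    convert hsum1 using 1
    all_goals first | rfl | ring
  have hU : ∀ᶠ t in 𝓝 wi, 0 < t ∧ 0 < 1 + (t - wi) * c := by
    have h1 : ∀ᶠ t in 𝓝 wi, 0 < t := eventually_gt_nhds (by rw [hwidef]; exact hw i)
    have hcont : ContinuousAt (fun t : ℝ => 1 + (t - wi) * c) wi := by fun_prop
    have h2 : ∀ᶠ t in 𝓝 wi, 0 < 1 + (t - wi) * c :=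
      hcont.preimage_mem_nhds (Ioi_mem_nhds (by norm_num))
    exact h1.and h2
  have heq : (fun t : ℝ => logMixPosterior A Sobs lam y (Function.update w i t)) =ᶠ[𝓝 wi] g := by
    filter_upwards [hU] with t ht
    obtain ⟨ht0, htc0⟩ := ht
    set s := t - wi with hsdef
    set E := Matrix.single i i (1:ℝ) with hEdef
    set W := Function.update w i t with hWdef
    clear_value s E W
    have hWpos : ∀ j, 0 < W j := by
      intro j
      rw [hWdef]
      rcases eq_or_ne j i with rfl | hj
      · simpa using ht0
      · rw [Function.update_of_ne hj]; exact hw j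
    have hsqW : ∀ j, Real.sqrt (W j) * Real.sqrt (W j) = W j :=
      fun j => Real.mul_self_sqrt (hWpos j).le
    have hsqWne : ∀ j, Real.sqrt (W j) ≠ 0 := fun j => (Real.sqrt_pos.mpr (hWpos j)).ne'
    set St := Matrix.diagonal (fun j => Real.sqrt (W j)) with hStdef
    set Dt := Matrix.diagonal (fun j => (Real.sqrt (W j))⁻¹) with hDtdef
    set Lt := Matrix.diagonal W with hLtdef
    clear_value St Dt Lt
    have hStDt : St * Dt = 1 := by
      rw [hStdef, hDtdef, Matrix.diagonal_mul_diagonal]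
      rw [show (fun j => Real.sqrt (W j) * (Real.sqrt (W j))⁻¹) = fun _ => (1:ℝ) from
        funext fun j => mul_inv_cancel₀ (hsqWne j)]
      exact Matrix.diagonal_one
    have hDtSt : Dt * St = 1 := by
      rw [hDtdef, hStdef, Matrix.diagonal_mul_diagonal]
      rw [show (fun j => (Real.sqrt (W j))⁻¹ * Real.sqrt (W j)) = fun _ => (1:ℝ) from
        funext fun j => inv_mul_cancel₀ (hsqWne j)]
      exact Matrix.diagonal_one
    have hLtDt : Lt * Dt = St := by
      rw [hLtdef, hDtdef, hStdef, Matrix.diagonal_mul_diagonal]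
      congr 1
      funext j
      field_simp [hsqWne j]
      exact (Real.sq_sqrt (hWpos j).le).symm
    have hDtLt : Dt * Lt = St := by
      rw [hLtdef, hDtdef, hStdef, Matrix.diagonal_mul_diagonal]
      congr 1
      funext j
      field_simp [hsqWne j]
      exact (Real.sq_sqrt (hWpos j).le).symm
    have hLtE : Lt = Matrix.diagonal w + s • E := by
      rw [hLtdef, hEdef, hWdef]
      ext p q
      simp only [Matrix.add_apply, Matrix.smul_apply, smul_eq_mul]
      rcases eq_or_ne p q with rfl | hpq
      · rcases eq_or_ne p i with rfl | hpi
        · rw [Matrix.diagonal_apply_eq, Matrix.diagonal_apply_eq, Function.update_self,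
            Matrix.single_apply_same, hsdef, hwidef]
          ring
        · rw [Matrix.diagonal_apply_eq, Matrix.diagonal_apply_eq, Function.update_of_ne hpi,
            Matrix.single_apply_of_ne (h := fun h : i = p ∧ i = p => hpi h.1.symm)]
          ring
      · rw [Matrix.diagonal_apply_ne _ hpq, Matrix.diagonal_apply_ne _ hpq,
          Matrix.single_apply_of_ne (h := fun h : i = p ∧ i = q => hpq (h.1.symm.trans h.2))]
        ring
    have hPt : M⁻¹ + Lt = P + s • E := by
      rw [hLtE, hPdef, add_assoc]
    set c' := s / (1 + s * c) with hc'def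
    set Nt := N - c' • (N * E * N) with hNtdef
    clear_value c' Nt
    have hcoef : c' + s * c' * c = s := by
      rw [hc'def]
      field_simp [htc0.ne']
    have h1 : P * (N * E * N) = E * N := by
      rw [← Matrix.mul_assoc, ← Matrix.mul_assoc, hPN, Matrix.one_mul]
    have h2 : E * (N * E * N) = c • (E * N) := by
      calc E * (N * E * N) = (E * N * E) * N := by
            rw [Matrix.mul_assoc, Matrix.mul_assoc, Matrix.mul_assoc]
        _ = c • (E * N) := by rw [hEdef, EXE_aux, Matrix.smul_mul, ← hcdef]
    have hPtN : (M⁻¹ + Lt) * Nt = 1 := by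
      rw [hPt]
      have hexp : (P + s • E) * Nt
          = P * N - c' • (P * (N * E * N)) + (s • (E * N) - (s * c') • (E * (N * E * N))) := by
        simp only [hNtdef, Matrix.add_mul, Matrix.mul_sub, Matrix.mul_smul, Matrix.smul_mul,
          smul_smul]
        module
      rw [hexp, hPN, h1, h2, smul_smul]
      have hmod : (1 : Matrix (Fin d) (Fin d) ℝ) - c' • (E * N)
          + (s • (E * N) - (s * c' * c) • (E * N))
          = 1 + (s - (c' + s * c' * c)) • (E * N) := by module
      rw [hmod, hcoef, sub_self, zero_smul, add_zero]
    set X := Lt - Lt * Nt * Lt with hXdef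
    clear_value X
    have hMX : M * X = Nt * Lt := by
      have h4 : M * ((M⁻¹ + Lt) * Nt) = M := by rw [hPtN, Matrix.mul_one]
      have h3 : M * Lt * Nt = M - Nt := by
        calc M * Lt * Nt = M * ((M⁻¹ + Lt) * Nt) - M * M⁻¹ * Nt := by noncomm_ring
          _ = M - Nt := by rw [h4, hMMinv, Matrix.one_mul]
      calc M * X = M * Lt - (M * Lt * Nt) * Lt := by rw [hXdef]; noncomm_ring
        _ = M * Lt - (M - Nt) * Lt := by rw [h3]
        _ = Nt * Lt := by noncomm_ring
    have hRight : (St * M * St + 1) * (Dt * X * Dt) = 1 := by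
      have e1 : (St * M * St + 1) * (Dt * X * Dt)
          = St * M * ((St * Dt) * X) * Dt + Dt * X * Dt := by noncomm_ring
      have eA : St * (M * X) * Dt = St * Nt * St := by
        rw [hMX, ← Matrix.mul_assoc, Matrix.mul_assoc (St * Nt) Lt Dt, hLtDt]
      have eB : Dt * X * Dt = 1 - St * Nt * St := by
        have e2 : Dt * X * Dt = Dt * Lt * Dt - Dt * Lt * Nt * (Lt * Dt) := by
          rw [hXdef]; noncomm_ring
        rw [e2, hDtLt, hStDt, hLtDt]
      rw [e1, hStDt, Matrix.one_mul, Matrix.mul_assoc St M X, eA, eB]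
      abel
    have hPtE_det : (P + s • E).det = P.det * (1 + s * c) := by
      have hfac : P + s • E = P * (1 + s • (N * E)) := by
        rw [Matrix.mul_add, Matrix.mul_one, Matrix.mul_smul, ← Matrix.mul_assoc, hPN,
          Matrix.one_mul]
      rw [hfac, Matrix.det_mul, hEdef, det_one_add_aux, ← hcdef]
    have hdet1 : St * M * St + 1 = St * (M * (M⁻¹ + Lt)) * Dt := by
      have e3 : St * (M * (M⁻¹ + Lt)) * Dt = St * (M * M⁻¹) * Dt + St * M * (Lt * Dt) := by
        noncomm_ring
      rw [e3, hMMinv, Matrix.mul_one, hStDt, hLtDt]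
      abel
    have hdetA : (St * M * St + 1).det = K * (1 + s * c) := by
      have hSD : St.det * Dt.det = 1 := by rw [← Matrix.det_mul, hStDt, Matrix.det_one]
      rw [hdet1, hPt, Matrix.det_mul, Matrix.det_mul, Matrix.det_mul, hPtE_det, hKdef]
      linear_combination (M.det * (P.det * (1 + s * c))) * hSD
    have hInv : (St * M * St + 1)⁻¹ = Dt * X * Dt := Matrix.inv_eq_right_inv hRight
    have hTT : Sobs⁻¹ * A * St * (St * M * St + 1)⁻¹ * St * Aᵀ * Sobs⁻¹
        = Sobs⁻¹ * A * (X * (Aᵀ * Sobs⁻¹)) := by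
      rw [hInv]
      rw [show Sobs⁻¹ * A * St * (Dt * X * Dt) * St * Aᵀ * Sobs⁻¹
          = Sobs⁻¹ * A * ((St * Dt) * (X * ((Dt * St) * (Aᵀ * Sobs⁻¹)))) from by
        simp only [Matrix.mul_assoc]]
      rw [hStDt, hDtSt, Matrix.one_mul, Matrix.one_mul]
    have hyq : y ⬝ᵥ (Sobs⁻¹ * A * (X * (Aᵀ * Sobs⁻¹))) *ᵥ y = b ⬝ᵥ X *ᵥ b := by
      rw [← Matrix.mulVec_mulVec, Matrix.dotProduct_mulVec]
      have e5 : y ᵥ* (Sobs⁻¹ * A) = b := by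
        rw [← Matrix.mulVec_transpose, Matrix.transpose_mul, hSsym]
        exact hbdef.symm
      rw [e5, ← Matrix.mulVec_mulVec, ← hbdef]
    set e : Fin d → ℝ := Pi.single i 1 with hedef
    clear_value e
    have hsymdot : ∀ x z : Fin d → ℝ, x ⬝ᵥ N *ᵥ z = (N *ᵥ x) ⬝ᵥ z := by
      intro x z
      rw [Matrix.dotProduct_mulVec]
      congr 1
      conv_lhs => rw [← hNsym]
      rw [Matrix.vecMul_transpose]
    have hNe : ∀ x : Fin d → ℝ, x ⬝ᵥ N *ᵥ e = (N *ᵥ x) i := by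
      intro x
      rw [hsymdot, hedef, dotProduct_single, mul_one]
    have heNx : ∀ x : Fin d → ℝ, e ⬝ᵥ N *ᵥ x = (N *ᵥ x) i := by
      intro x
      rw [hedef, single_dotProduct, one_mul]
    have hNei : (N *ᵥ e) i = c := by
      rw [hedef]
      simp only [Matrix.mulVec_single_one]
      exact hcdef.symm
    have hu : Lt *ᵥ b = v + (s * b i) • e := by
      funext j
      simp only [Pi.add_apply, Pi.smul_apply, smul_eq_mul]
      rw [hLtdef, Matrix.mulVec_diagonal, hvdef, Matrix.mulVec_diagonal]
      rcases eq_or_ne j i with rfl | hj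
      · rw [hedef, Pi.single_eq_same, hWdef, Function.update_self, hsdef, hwidef]
        ring
      · rw [hWdef, Function.update_of_ne hj, hedef, Pi.single_eq_of_ne hj]
        ring
    have huNu : (Lt *ᵥ b) ⬝ᵥ N *ᵥ (Lt *ᵥ b) = q0 + 2*s*(b i)*a + s^2*(b i)^2*c := by
      rw [hu, Matrix.mulVec_add, Matrix.mulVec_smul]
      simp only [dotProduct_add, add_dotProduct, dotProduct_smul, smul_dotProduct, smul_eq_mul]
      rw [hNe v, heNx v, heNx e, hNei, ← hadef, ← hq0def]
      ring
    have hNui : (N *ᵥ (Lt *ᵥ b)) i = a + s*(b i)*c := by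
      rw [hu, Matrix.mulVec_add, Matrix.mulVec_smul]
      simp only [Pi.add_apply, Pi.smul_apply, smul_eq_mul]
      rw [hNei, ← hadef]
    have hNENu : (Lt *ᵥ b) ⬝ᵥ (N * E * N) *ᵥ (Lt *ᵥ b) = (a + s*(b i)*c)^2 := by
      have hEmul : E *ᵥ (N *ᵥ (Lt *ᵥ b)) = ((N *ᵥ (Lt *ᵥ b)) i) • e := by
        rw [hEdef, Matrix.single_mulVec, hedef]
        funext j
        rcases eq_or_ne j i with rfl | hj
        · simp
        · simp [Function.update_of_ne hj, Pi.single_eq_of_ne hj]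
      calc (Lt *ᵥ b) ⬝ᵥ (N * E * N) *ᵥ (Lt *ᵥ b)
          = (Lt *ᵥ b) ⬝ᵥ N *ᵥ (E *ᵥ (N *ᵥ (Lt *ᵥ b))) := by
            simp only [Matrix.mulVec_mulVec, Matrix.mul_assoc]
        _ = (a + s*(b i)*c)^2 := by
            rw [hEmul, Matrix.mulVec_smul, dotProduct_smul, smul_eq_mul, hNe, hNui]
            ring
    have hXq : b ⬝ᵥ X *ᵥ b = L0 + s*(b i)^2 - (q0 + 2*s*(b i)*a + s^2*(b i)^2*c)
        + s*(a + s*(b i)*c)^2 / (1 + s*c) := by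
      have hbL : b ⬝ᵥ Lt *ᵥ b = L0 + s*(b i)^2 := by
        rw [hu, dotProduct_add, dotProduct_smul, smul_eq_mul, hedef,
          dotProduct_single, mul_one, ← hL0def]
        ring
      have hLtsym : Ltᵀ = Lt := by rw [hLtdef, Matrix.diagonal_transpose]
      have hvec : b ⬝ᵥ (Lt * Nt * Lt) *ᵥ b = (Lt *ᵥ b) ⬝ᵥ Nt *ᵥ (Lt *ᵥ b) := by
        rw [← Matrix.mulVec_mulVec, ← Matrix.mulVec_mulVec, Matrix.dotProduct_mulVec b Lt]
        congr 1
        conv_rhs => rw [← hLtsym]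
        rw [Matrix.mulVec_transpose]
      have hNtq : (Lt *ᵥ b) ⬝ᵥ Nt *ᵥ (Lt *ᵥ b)
          = (q0 + 2*s*(b i)*a + s^2*(b i)^2*c) - c' * (a + s*(b i)*c)^2 := by
        rw [hNtdef, Matrix.sub_mulVec, dotProduct_sub, huNu, Matrix.smul_mulVec,
          dotProduct_smul, smul_eq_mul, hNENu]
      rw [hXdef, Matrix.sub_mulVec, dotProduct_sub, hbL, hvec, hNtq, hc'def]
      field_simp
      ring
    have hsum : ∑ j, lam j * W j = (∑ j, lam j * w j) + lam i * s := by
      have hptw : ∀ j, lam j * W j = lam j * w j + (if j = i then lam i * s else 0) := by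
        intro j
        rcases eq_or_ne j i with rfl | hj
        · rw [hWdef, Function.update_self, if_pos rfl, hsdef, hwidef]; ring
        · rw [hWdef, Function.update_of_ne hj, if_neg hj]; ring
      rw [Finset.sum_congr rfl (fun j _ => hptw j), Finset.sum_add_distrib,
        Finset.sum_ite_eq' Finset.univ i (fun _ => lam i * s)]
      simp
    show logMixPosterior A Sobs lam y W = g t
    rw [hgdef]
    simp only [logMixPosterior]
    rw [← hMdef, ← hStdef, hdetA, hTT, hyq, hXq, hsum, hC1def, hsdef]
    ring
  rw [hzi]
  exact hgd.congr_of_eventuallyEq heq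
end

section
/- Assume additionally that M = AᵀΣ_obs⁻¹A is invertible, and let λ ∈ ℝ^d have positive entries. For w ∈ ℝ^d with strictly positive entries define F(w) = −Σ_{i=1}^d λ_i w_i − (1/2)·log det(Λ_w^{1/2} M Λ_w^{1/2} + I) + (1/2)·yᵀΣ_obs⁻¹A Λ_w^{1/2}(Λ_w^{1/2} M Λ_w^{1/2} + I)⁻¹ Λ_w^{1/2} AᵀΣ_obs⁻¹y. Then for every such w and all indices i, j, the second partial derivative ∂²F/∂w_i∂w_j at w exists and equals (1/2)·([(M⁻¹ + Λ_w)⁻¹]_{ij})² − z_i·[(M⁻¹ + Λ_w)⁻¹]_{ij}·z_j, where z = (M⁻¹ + Λ_w)⁻¹ M⁻¹ AᵀΣ_obs⁻¹y; equivalently, the Hessian of F at w is (1/2)·((M⁻¹+Λ_w)⁻¹)^{⊙2} − Λ_z (M⁻¹+Λ_w)⁻¹ Λ_z, where ⊙2 denotes the entrywise square and Λ_z the diagonal matrix with z on its diagonal. (Hessian formula, appendix C.1, of the log posterior mixing density.) -/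
open Matrix MeasureTheory Real

set_option linter.unusedSectionVars false

attribute [local instance] Matrix.linftyOpNormedRing Matrix.linftyOpNormedAlgebra
  Matrix.linftyOpNormedAddCommGroup

namespace HessianAux

variable {d m : ℕ}

/-! ### Calculus helpers -/

lemma hasDerivAt_matrix_entry' {f : ℝ → Matrix (Fin d) (Fin d) ℝ}
    {D : Matrix (Fin d) (Fin d) ℝ} {x : ℝ} (h : HasDerivAt f D x) (a b : Fin d) :
    HasDerivAt (fun s => f s a b) (D a b) x := by
  let L : Matrix (Fin d) (Fin d) ℝ →ₗ[ℝ] ℝ :=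
    { toFun := fun B => B a b
      map_add' := fun _ _ => rfl
      map_smul' := fun _ _ => rfl }
  have := (L.toContinuousLinearMap.hasFDerivAt (x := f x)).comp_hasDerivAt x h
  exact this

lemma hasDerivAt_matrix_inv_line (X : Matrix (Fin d) (Fin d) ℝ) (hX : IsUnit X)
    (E : Matrix (Fin d) (Fin d) ℝ) (x : ℝ) :
    HasDerivAt (fun s : ℝ => (X + (s - x) • E)⁻¹) (-(X⁻¹ * E * X⁻¹)) x := by
  have h1 : HasDerivAt (fun s : ℝ => X + (s - x) • E) E x := by
    exact ((((hasDerivAt_id x).sub_const x).smul_const E).const_add X).congr_deriv (one_smul _ _)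
  have hx1 : X + ((x : ℝ) - x) • E = (hX.unit : Matrix (Fin d) (Fin d) ℝ) := by
    simp [hX.unit_spec]
  have h2' : HasFDerivAt (Ring.inverse (M₀ := Matrix (Fin d) (Fin d) ℝ))
      (-ContinuousLinearMap.mulLeftRight ℝ _ ↑hX.unit⁻¹ ↑hX.unit⁻¹) (X + ((x : ℝ) - x) • E) := by
    rw [hx1]; exact hasFDerivAt_ringInverse (𝕜 := ℝ) hX.unit
  have h2 := h2'.comp_hasDerivAt x h1
  have hinv : (↑hX.unit⁻¹ : Matrix (Fin d) (Fin d) ℝ) = X⁻¹ := by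
    have h := Ring.inverse_unit hX.unit
    rw [hX.unit_spec] at h
    rw [Matrix.nonsing_inv_eq_ringInverse, ← h]
  have h3 : HasDerivAt (fun s : ℝ => Ring.inverse (X + (s - x) • E)) (-(X⁻¹ * E * X⁻¹)) x := by
    simp only [Function.comp_def, hinv] at h2; exact h2
  simpa [Matrix.nonsing_inv_eq_ringInverse] using h3

lemma diagonal_update (v : Fin d → ℝ) (k : Fin d) (s : ℝ) :
    Matrix.diagonal (Function.update v k s)
      = Matrix.diagonal v + (s - v k) • Matrix.single k k 1 := by
  ext a b
  simp only [Matrix.add_apply, Matrix.smul_apply, Matrix.single, Matrix.of_apply,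
    smul_eq_mul, mul_ite, mul_one, mul_zero]
  rcases eq_or_ne a b with rfl | hab
  · rcases eq_or_ne a k with rfl | hak
    · simp
    · simp [Function.update_of_ne hak, Ne.symm hak]
  · rcases eq_or_ne a k with rfl | hak
    · simp only [Matrix.diagonal_apply_ne _ hab, zero_add]
      rw [if_neg]; rintro ⟨-, rfl⟩; exact hab rfl
    · simp [Matrix.diagonal_apply_ne _ hab, Ne.symm hak]

lemma hasDerivAt_det_line (X : Matrix (Fin d) (Fin d) ℝ) (k : Fin d) (x : ℝ) :
    HasDerivAt (fun s : ℝ => (X + (s - x) • Matrix.single k k 1).det)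
      (X.adjugate k k) x := by
  have key : (fun s : ℝ => (X + (s - x) • Matrix.single k k 1).det)
      = fun s : ℝ => X.det + (s - x) * X.adjugate k k := by
    funext s
    have hrow : X + (s - x) • Matrix.single k k 1
        = X.updateRow k (X k + (s - x) • (Pi.single k 1 : Fin d → ℝ)) := by
      ext a b
      rcases eq_or_ne a k with rfl | hak
      · simp [Matrix.updateRow_self, Matrix.single, Pi.single_apply, eq_comm]
      · simp [Matrix.updateRow_ne hak, Matrix.single, Ne.symm hak]
    rw [hrow, Matrix.det_updateRow_add, Matrix.det_updateRow_smul,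
      Matrix.updateRow_eq_self, Matrix.adjugate_apply]
  rw [key]
  simpa using (((hasDerivAt_id x).sub_const x).mul_const (X.adjugate k k)).const_add X.det

lemma hasDerivAt_quadform {f : ℝ → Matrix (Fin d) (Fin d) ℝ}
    {D : Matrix (Fin d) (Fin d) ℝ} {x : ℝ} (h : HasDerivAt f D x) (c : Fin d → ℝ) :
    HasDerivAt (fun s => c ⬝ᵥ (f s).mulVec c) (c ⬝ᵥ D.mulVec c) x := by
  simp only [dotProduct, Matrix.mulVec, Finset.mul_sum]
  exact HasDerivAt.fun_sum fun a _ => HasDerivAt.fun_sum fun b _ =>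
    (((hasDerivAt_matrix_entry' h a b).mul_const (c b)).const_mul (c a))

lemma hasDerivAt_mulVec_entry {f : ℝ → Matrix (Fin d) (Fin d) ℝ}
    {D : Matrix (Fin d) (Fin d) ℝ} {x : ℝ} (h : HasDerivAt f D x) (c : Fin d → ℝ) (j : Fin d) :
    HasDerivAt (fun s => (f s).mulVec c j) (D.mulVec c j) x := by
  simp only [Matrix.mulVec, dotProduct]
  exact HasDerivAt.fun_sum fun b _ => ((hasDerivAt_matrix_entry' h j b).mul_const (c b))

lemma hasDerivAt_lam_sum (lam v : Fin d → ℝ) (j : Fin d) :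
    HasDerivAt (fun s => ∑ i, lam i * Function.update v j s i) (lam j) (v j) := by
  have key : (fun s => ∑ i, lam i * Function.update v j s i)
      = fun s => lam j * s + ∑ i ∈ Finset.univ.erase j, lam i * v i := by
    funext s
    rw [← Finset.add_sum_erase _ _ (Finset.mem_univ j)]
    congr 1
    · simp
    · exact Finset.sum_congr rfl fun i hi => by
        rw [Function.update_of_ne (Finset.ne_of_mem_erase hi)]
  rw [key]
  exact (((hasDerivAt_id (v j)).const_mul (lam j)).add_const _).congr_deriv (mul_one _)

lemma mul_stdBasis_mul (G H : Matrix (Fin d) (Fin d) ℝ) (i a b : Fin d) :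
    (G * Matrix.single i i (1:ℝ) * H) a b = G a i * H i b := by
  rw [Matrix.mul_assoc, Matrix.mul_apply]
  simp [Matrix.mul_apply, Matrix.single, ite_and, Finset.sum_ite_eq, mul_ite, ite_mul]

lemma mul_stdBasis_mul_mulVec (G H : Matrix (Fin d) (Fin d) ℝ) (i a : Fin d) (c : Fin d → ℝ) :
    (G * Matrix.single i i (1:ℝ) * H).mulVec c a = G a i * H.mulVec c i := by
  simp only [Matrix.mulVec, dotProduct, mul_stdBasis_mul, mul_assoc, ← Finset.mul_sum]

lemma dot_sym_eval (G : Matrix (Fin d) (Fin d) ℝ) (hGsym : Gᵀ = G) (c : Fin d → ℝ) (i : Fin d) :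
    c ⬝ᵥ (G * Matrix.single i i (1:ℝ) * G).mulVec c = (G.mulVec c i) ^ 2 := by
  have h1 : ∀ a, c a * ((G * Matrix.single i i (1:ℝ) * G).mulVec c a)
      = (c a * G a i) * G.mulVec c i := fun a => by rw [mul_stdBasis_mul_mulVec]; ring
  have h2 : ∑ a, c a * G a i = G.mulVec c i := by
    simp only [Matrix.mulVec, dotProduct]
    refine Finset.sum_congr rfl fun a _ => ?_
    have ha : G i a = G a i :=
      (congrFun (congrFun hGsym.symm i) a).trans (Matrix.transpose_apply G i a)
    rw [mul_comm, ha]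
  calc c ⬝ᵥ (G * Matrix.single i i (1:ℝ) * G).mulVec c
      = ∑ a, (c a * G a i) * G.mulVec c i := by
        simp only [dotProduct]; exact Finset.sum_congr rfl fun a _ => h1 a
    _ = (∑ a, c a * G a i) * G.mulVec c i := by rw [Finset.sum_mul]
    _ = (G.mulVec c i) ^ 2 := by rw [h2]; ring

/-! ### Positive-definiteness facts -/

lemma posDef_of_posSemidef_isUnit {M : Matrix (Fin d) (Fin d) ℝ}
    (h1 : M.PosSemidef) (h2 : IsUnit M) : M.PosDef := by
  rw [Matrix.posDef_iff_dotProduct_mulVec]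
  refine ⟨h1.1, fun x hx => lt_of_le_of_ne ((Matrix.posSemidef_iff_dotProduct_mulVec.mp h1).2 x) fun h0 => hx ?_⟩
  have hMx : M *ᵥ x = 0 := (h1.dotProduct_mulVec_zero_iff x).mp (by simpa using h0.symm)
  exact Matrix.mulVec_injective_iff_isUnit.mpr h2 (a₁ := x) (a₂ := 0) (by simpa using hMx)

lemma M_posDef (A : Matrix (Fin m) (Fin d) ℝ) {Sobs : Matrix (Fin m) (Fin m) ℝ}
    (hSobs : Sobs.PosDef) (hM : IsUnit (Aᵀ * Sobs⁻¹ * A)) : (Aᵀ * Sobs⁻¹ * A).PosDef := by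
  refine posDef_of_posSemidef_isUnit ?_ hM
  simpa using hSobs.inv.posSemidef.conjTranspose_mul_mul_same A

lemma N_posDef {M : Matrix (Fin d) (Fin d) ℝ} (hMpd : M.PosDef) {v : Fin d → ℝ}
    (hv : ∀ i, 0 < v i) : (M⁻¹ + Matrix.diagonal v).PosDef :=
  hMpd.inv.add_posSemidef (Matrix.posSemidef_diagonal_iff.mpr fun i => (hv i).le)

lemma cancel_left {B C D : Matrix (Fin d) (Fin d) ℝ} (h : B * C = 1) :
    B * (C * D) = D := by rw [← Matrix.mul_assoc, h, Matrix.one_mul]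

section sqrtfacts
variable {v : Fin d → ℝ} (hv : ∀ i, 0 < v i)

include hv in
lemma half_mul_invhalf :
    Matrix.diagonal (fun i => Real.sqrt (v i)) * Matrix.diagonal (fun i => (Real.sqrt (v i))⁻¹)
      = 1 := by
  rw [Matrix.diagonal_mul_diagonal]
  have : (fun i => Real.sqrt (v i) * (Real.sqrt (v i))⁻¹) = fun _ : Fin d => (1:ℝ) :=
    funext fun i => mul_inv_cancel₀ (ne_of_gt (Real.sqrt_pos.mpr (hv i)))
  rw [this, Matrix.diagonal_one]

include hv in
lemma invhalf_mul_half :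
    Matrix.diagonal (fun i => (Real.sqrt (v i))⁻¹) * Matrix.diagonal (fun i => Real.sqrt (v i))
      = 1 := by
  rw [Matrix.diagonal_mul_diagonal]
  have : (fun i => (Real.sqrt (v i))⁻¹ * Real.sqrt (v i)) = fun _ : Fin d => (1:ℝ) :=
    funext fun i => inv_mul_cancel₀ (ne_of_gt (Real.sqrt_pos.mpr (hv i)))
  rw [this, Matrix.diagonal_one]

include hv in
lemma half_mul_half :
    Matrix.diagonal (fun i => Real.sqrt (v i)) * Matrix.diagonal (fun i => Real.sqrt (v i))
      = Matrix.diagonal v := by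
  rw [Matrix.diagonal_mul_diagonal]
  have : (fun i => Real.sqrt (v i) * Real.sqrt (v i)) = v :=
    funext fun i => Real.mul_self_sqrt (hv i).le
  rw [this]

lemma diag_mul_invhalf :
    Matrix.diagonal v * Matrix.diagonal (fun i => (Real.sqrt (v i))⁻¹)
      = Matrix.diagonal (fun i => Real.sqrt (v i)) := by
  rw [Matrix.diagonal_mul_diagonal]
  have : (fun i => v i * (Real.sqrt (v i))⁻¹) = fun i => Real.sqrt (v i) := by
    funext i
    rw [← div_eq_mul_inv, Real.div_sqrt]
  rw [this]

end sqrtfacts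

section algebra
variable {M : Matrix (Fin d) (Fin d) ℝ} (hMpd : M.PosDef) {v : Fin d → ℝ} (hv : ∀ i, 0 < v i)

local notation "Λ½" => Matrix.diagonal (fun i => Real.sqrt (v i))
local notation "Λ⁻½" => Matrix.diagonal (fun i => (Real.sqrt (v i))⁻¹)
local notation "N" => M⁻¹ + Matrix.diagonal v

include hMpd hv

lemma MMinv : M * M⁻¹ = 1 :=
  Matrix.mul_nonsing_inv _ (Matrix.isUnit_iff_isUnit_det _ |>.mp hMpd.isUnit)
lemma MinvM : M⁻¹ * M = 1 :=
  Matrix.nonsing_inv_mul _ (Matrix.isUnit_iff_isUnit_det _ |>.mp hMpd.isUnit)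
lemma NNinv : (N) * (N)⁻¹ = 1 := Matrix.mul_nonsing_inv _
  (Matrix.isUnit_iff_isUnit_det _ |>.mp (N_posDef hMpd hv).isUnit)
lemma NinvN : (N)⁻¹ * (N) = 1 := Matrix.nonsing_inv_mul _
  (Matrix.isUnit_iff_isUnit_det _ |>.mp (N_posDef hMpd hv).isUnit)

lemma factor : Λ½ * M * Λ½ + 1 = Λ½ * (M * (N)) * Λ⁻½ := by
  have expand : M * (N) = 1 + M * Matrix.diagonal v := by
    rw [Matrix.mul_add, MMinv hMpd hv]
  rw [expand, Matrix.mul_add, Matrix.mul_one, Matrix.add_mul,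
    half_mul_invhalf hv, add_comm]
  congr 1
  rw [Matrix.mul_assoc, Matrix.mul_assoc, Matrix.mul_assoc, diag_mul_invhalf]

lemma X_posDef : (Λ½ * M * Λ½ + 1).PosDef := by
  have h1 : (Λ½ * M * Λ½).PosSemidef := by
    have := hMpd.posSemidef.mul_mul_conjTranspose_same (Λ½)
    simpa [Matrix.conjTranspose_eq_transpose_of_trivial, Matrix.diagonal_transpose] using this
  exact Matrix.PosDef.posSemidef_add h1 Matrix.PosDef.one

lemma Xinv : (Λ½ * M * Λ½ + 1)⁻¹ = Λ½ * ((N)⁻¹ * (M⁻¹ * Λ⁻½)) := by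
  apply Matrix.inv_eq_right_inv
  rw [factor hMpd hv]
  calc Λ½ * (M * (N)) * Λ⁻½ * (Λ½ * ((N)⁻¹ * (M⁻¹ * Λ⁻½)))
      = Λ½ * ((M * ((N) * ((N)⁻¹ * (M⁻¹ * Λ⁻½))))) := by
        rw [Matrix.mul_assoc (Λ½ * (M * (N))), cancel_left (invhalf_mul_half hv)]
        simp only [Matrix.mul_assoc]
    _ = Λ½ * Λ⁻½ := by rw [cancel_left (NNinv hMpd hv), cancel_left (MMinv hMpd hv)]
    _ = 1 := half_mul_invhalf hv

lemma det_factor : (Λ½ * M * Λ½ + 1).det = M.det * (N).det := by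
  rw [factor hMpd hv, Matrix.det_mul, Matrix.det_mul, Matrix.det_mul]
  have : (Λ½).det * ((Λ⁻½).det) = 1 := by
    rw [← Matrix.det_mul, half_mul_invhalf hv, Matrix.det_one]
  calc (Λ½).det * (M.det * (N).det) * (Λ⁻½).det
      = (Λ½).det * (Λ⁻½).det * (M.det * (N).det) := by ring
    _ = M.det * (N).det := by rw [this, one_mul]

lemma sandwich : Λ½ * (Λ½ * M * Λ½ + 1)⁻¹ * Λ½ = Matrix.diagonal v * ((N)⁻¹ * M⁻¹) := by
  rw [Xinv hMpd hv]
  calc Λ½ * (Λ½ * ((N)⁻¹ * (M⁻¹ * Λ⁻½))) * Λ½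
      = (Λ½ * Λ½) * ((N)⁻¹ * (M⁻¹ * (Λ⁻½ * Λ½))) := by simp only [Matrix.mul_assoc]
    _ = Matrix.diagonal v * ((N)⁻¹ * M⁻¹) := by
        rw [half_mul_half hv, invhalf_mul_half hv, Matrix.mul_one]

lemma diagv_Ninv : Matrix.diagonal v * (N)⁻¹ = 1 - M⁻¹ * (N)⁻¹ := by
  have : (M⁻¹ + Matrix.diagonal v) * (N)⁻¹ = 1 := NNinv hMpd hv
  rw [Matrix.add_mul] at this
  linear_combination (norm := (rw [sub_eq_iff_eq_add]; abel_nf)) this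

end algebra

lemma dot_conj (y : Fin m → ℝ) (B : Matrix (Fin d) (Fin m) ℝ) (G : Matrix (Fin d) (Fin d) ℝ) :
    y ⬝ᵥ (Bᵀ * G * B).mulVec y = (B.mulVec y) ⬝ᵥ G.mulVec (B.mulVec y) := by
  rw [← Matrix.mulVec_mulVec, ← Matrix.mulVec_mulVec, dotProduct_mulVec,
    Matrix.vecMul_transpose]

noncomputable def Ftilde (A : Matrix (Fin m) (Fin d) ℝ) (Sobs : Matrix (Fin m) (Fin m) ℝ)
    (lam : Fin d → ℝ) (y : Fin m → ℝ) (v : Fin d → ℝ) : ℝ :=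
  ((1/2) * (y ⬝ᵥ (Sobs⁻¹ * A * (Aᵀ * Sobs⁻¹ * A)⁻¹ * Aᵀ * Sobs⁻¹).mulVec y)
      - (1/2) * Real.log (Aᵀ * Sobs⁻¹ * A).det)
    - (∑ i, lam i * v i)
    - (1/2) * Real.log ((Aᵀ * Sobs⁻¹ * A)⁻¹ + Matrix.diagonal v).det
    - (1/2) * ((((Aᵀ * Sobs⁻¹ * A)⁻¹ * Aᵀ * Sobs⁻¹).mulVec y) ⬝ᵥ
        (((Aᵀ * Sobs⁻¹ * A)⁻¹ + Matrix.diagonal v)⁻¹).mulVec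
          (((Aᵀ * Sobs⁻¹ * A)⁻¹ * Aᵀ * Sobs⁻¹).mulVec y))

lemma logMix_eq_Ftilde (A : Matrix (Fin m) (Fin d) ℝ) {Sobs : Matrix (Fin m) (Fin m) ℝ}
    (hSobs : Sobs.PosDef) (lam : Fin d → ℝ) (y : Fin m → ℝ)
    (hM : IsUnit (Aᵀ * Sobs⁻¹ * A)) {v : Fin d → ℝ} (hv : ∀ i, 0 < v i) :
    logMixPosterior A Sobs lam y v = Ftilde A Sobs lam y v := by
  have hMpd := M_posDef A hSobs hM
  set M := Aᵀ * Sobs⁻¹ * A with hMdef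
  set Nv := M⁻¹ + Matrix.diagonal v with hNdef
  have hdet : ((Matrix.diagonal fun i => Real.sqrt (v i)) * M
      * (Matrix.diagonal fun i => Real.sqrt (v i)) + 1).det = M.det * Nv.det :=
    det_factor hMpd hv
  have hlogdet : Real.log (((Matrix.diagonal fun i => Real.sqrt (v i)) * M
      * (Matrix.diagonal fun i => Real.sqrt (v i)) + 1).det)
      = Real.log M.det + Real.log Nv.det := by
    rw [hdet, Real.log_mul hMpd.det_pos.ne' (N_posDef hMpd hv).det_pos.ne']
  have hSsym : Sobs⁻¹ᵀ = Sobs⁻¹ := by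
    have := hSobs.inv.1
    rwa [Matrix.IsHermitian, Matrix.conjTranspose_eq_transpose_of_trivial] at this
  have hMinvsym : (M⁻¹)ᵀ = M⁻¹ := by
    rw [Matrix.transpose_nonsing_inv]
    congr 1
    have := hMpd.1
    rwa [Matrix.IsHermitian, Matrix.conjTranspose_eq_transpose_of_trivial] at this
  have hBT : (M⁻¹ * Aᵀ * Sobs⁻¹)ᵀ = Sobs⁻¹ * A * M⁻¹ := by
    rw [Matrix.transpose_mul, Matrix.transpose_mul, Matrix.transpose_transpose,
      hSsym, hMinvsym, Matrix.mul_assoc]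
  have hquadmat : Sobs⁻¹ * A * (Matrix.diagonal fun i => Real.sqrt (v i))
      * ((Matrix.diagonal fun i => Real.sqrt (v i)) * M
          * (Matrix.diagonal fun i => Real.sqrt (v i)) + 1)⁻¹
      * (Matrix.diagonal fun i => Real.sqrt (v i)) * Aᵀ * Sobs⁻¹
      = Sobs⁻¹ * A * M⁻¹ * Aᵀ * Sobs⁻¹
        - (M⁻¹ * Aᵀ * Sobs⁻¹)ᵀ * Nv⁻¹ * (M⁻¹ * Aᵀ * Sobs⁻¹) := by
    have hsand := sandwich hMpd hv
    have hdvN := diagv_Ninv hMpd hv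
    rw [hBT]
    calc Sobs⁻¹ * A * (Matrix.diagonal fun i => Real.sqrt (v i))
          * ((Matrix.diagonal fun i => Real.sqrt (v i)) * M
              * (Matrix.diagonal fun i => Real.sqrt (v i)) + 1)⁻¹
          * (Matrix.diagonal fun i => Real.sqrt (v i)) * Aᵀ * Sobs⁻¹
        = Sobs⁻¹ * A * ((Matrix.diagonal fun i => Real.sqrt (v i))
            * ((Matrix.diagonal fun i => Real.sqrt (v i)) * M
              * (Matrix.diagonal fun i => Real.sqrt (v i)) + 1)⁻¹
            * (Matrix.diagonal fun i => Real.sqrt (v i))) * (Aᵀ * Sobs⁻¹) := by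
          simp only [Matrix.mul_assoc]
      _ = Sobs⁻¹ * A * (Matrix.diagonal v * (Nv⁻¹ * M⁻¹)) * (Aᵀ * Sobs⁻¹) := by rw [hsand]
      _ = Sobs⁻¹ * A * ((Matrix.diagonal v * Nv⁻¹) * M⁻¹) * (Aᵀ * Sobs⁻¹) := by
          simp only [Matrix.mul_assoc]
      _ = Sobs⁻¹ * A * ((1 - M⁻¹ * Nv⁻¹) * M⁻¹) * (Aᵀ * Sobs⁻¹) := by rw [hdvN]
      _ = Sobs⁻¹ * A * (M⁻¹ - M⁻¹ * Nv⁻¹ * M⁻¹) * (Aᵀ * Sobs⁻¹) := by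
          rw [Matrix.sub_mul, Matrix.one_mul]
      _ = Sobs⁻¹ * A * M⁻¹ * Aᵀ * Sobs⁻¹
          - Sobs⁻¹ * A * M⁻¹ * Nv⁻¹ * (M⁻¹ * Aᵀ * Sobs⁻¹) := by
          rw [Matrix.mul_sub, Matrix.sub_mul]
          simp only [Matrix.mul_assoc]
  rw [logMixPosterior, Ftilde, hlogdet, hquadmat]
  rw [Matrix.sub_mulVec, dotProduct_sub, dot_conj]
  ring

/-- Symmetry of `(M⁻¹ + Λ_v)⁻¹`. -/
lemma Ninv_sym {M : Matrix (Fin d) (Fin d) ℝ} (hMpd : M.PosDef) (v : Fin d → ℝ) :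
    (((M⁻¹ + Matrix.diagonal v)⁻¹)ᵀ : Matrix (Fin d) (Fin d) ℝ)
      = (M⁻¹ + Matrix.diagonal v)⁻¹ := by
  have hMinvsym : (M⁻¹)ᵀ = M⁻¹ := by
    rw [Matrix.transpose_nonsing_inv]
    congr 1
    have := hMpd.1
    rwa [Matrix.IsHermitian, Matrix.conjTranspose_eq_transpose_of_trivial] at this
  rw [Matrix.transpose_nonsing_inv, Matrix.transpose_add, Matrix.diagonal_transpose, hMinvsym]

/-- First-order partial derivative of `Ftilde`. -/
lemma hasDerivAt_Ftilde_update (A : Matrix (Fin m) (Fin d) ℝ) {Sobs : Matrix (Fin m) (Fin m) ℝ}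
    (hSobs : Sobs.PosDef) (lam : Fin d → ℝ) (y : Fin m → ℝ)
    (hM : IsUnit (Aᵀ * Sobs⁻¹ * A)) {v : Fin d → ℝ} (hv : ∀ i, 0 < v i) (j : Fin d) :
    HasDerivAt (fun s => Ftilde A Sobs lam y (Function.update v j s))
      (-(lam j) - (1/2) * (((Aᵀ * Sobs⁻¹ * A)⁻¹ + Matrix.diagonal v)⁻¹ j j)
        + (1/2) * ((((Aᵀ * Sobs⁻¹ * A)⁻¹ + Matrix.diagonal v)⁻¹.mulVec
            (((Aᵀ * Sobs⁻¹ * A)⁻¹ * Aᵀ * Sobs⁻¹).mulVec y) j)) ^ 2)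
      (v j) := by
  have hMpd := M_posDef A hSobs hM
  set M := Aᵀ * Sobs⁻¹ * A with hMdef
  set c := (M⁻¹ * Aᵀ * Sobs⁻¹).mulVec y with hcdef
  set Nv := M⁻¹ + Matrix.diagonal v with hNdef
  set E := Matrix.single j j (1:ℝ) with hEdef
  have hNpd : Nv.PosDef := N_posDef hMpd hv
  have hNfun : ∀ s : ℝ, M⁻¹ + Matrix.diagonal (Function.update v j s)
      = Nv + (s - v j) • E := fun s => by
    rw [diagonal_update, hNdef, add_assoc]
  -- the determinant/log part
  have hdet := hasDerivAt_det_line Nv j (v j)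
  have hdet' : HasDerivAt (fun s => (M⁻¹ + Matrix.diagonal (Function.update v j s)).det)
      (Nv.adjugate j j) (v j) := by
    simpa only [hNfun] using hdet
  have hdetne : (M⁻¹ + Matrix.diagonal (Function.update v j (v j))).det ≠ 0 := by
    rw [Function.update_eq_self]
    exact hNpd.det_pos.ne'
  have hlog := hdet'.log hdetne
  have hlogval : Nv.adjugate j j / (M⁻¹ + Matrix.diagonal (Function.update v j (v j))).det
      = Nv⁻¹ j j := by
    rw [Function.update_eq_self, ← hNdef, Matrix.inv_def, Matrix.smul_apply, smul_eq_mul,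
      Ring.inverse_eq_inv', div_eq_inv_mul]
  have hlog' : HasDerivAt
      (fun s => Real.log (M⁻¹ + Matrix.diagonal (Function.update v j s)).det)
      (Nv⁻¹ j j) (v j) := hlogval ▸ hlog
  -- the quadratic part
  have hG : HasDerivAt (fun s => (M⁻¹ + Matrix.diagonal (Function.update v j s))⁻¹)
      (-(Nv⁻¹ * E * Nv⁻¹)) (v j) := by
    simpa only [hNfun] using hasDerivAt_matrix_inv_line Nv hNpd.isUnit E (v j)
  have hquad := hasDerivAt_quadform hG c
  have hquadval : c ⬝ᵥ (-(Nv⁻¹ * E * Nv⁻¹)).mulVec c = -((Nv⁻¹.mulVec c j) ^ 2) := by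
    rw [Matrix.neg_mulVec, dotProduct_neg, dot_sym_eval Nv⁻¹ (Ninv_sym hMpd v) c j]
  rw [hquadval] at hquad
  -- the linear part
  have hlin := hasDerivAt_lam_sum lam v j
  -- assemble
  have hcomb := (((hasDerivAt_const (v j)
      ((1/2) * (y ⬝ᵥ (Sobs⁻¹ * A * M⁻¹ * Aᵀ * Sobs⁻¹).mulVec y)
        - (1/2) * Real.log M.det)).sub hlin).sub
      (hlog'.const_mul (1/2))).sub (hquad.const_mul (1/2))
  have hfun : (fun s => ((1/2) * (y ⬝ᵥ (Sobs⁻¹ * A * M⁻¹ * Aᵀ * Sobs⁻¹).mulVec y)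
        - (1/2) * Real.log M.det)
      - (∑ i, lam i * Function.update v j s i)
      - (1/2) * Real.log (M⁻¹ + Matrix.diagonal (Function.update v j s)).det
      - (1/2) * (c ⬝ᵥ (M⁻¹ + Matrix.diagonal (Function.update v j s))⁻¹.mulVec c))
      = fun s => Ftilde A Sobs lam y (Function.update v j s) := by
    funext s
    rw [Ftilde]
  rw [← hfun]
  exact hcomb.congr_deriv (by ring)

/-- Value of the first-order partial derivatives of `logMixPosterior` on the positive orthant. -/
lemma deriv_logMix (A : Matrix (Fin m) (Fin d) ℝ) {Sobs : Matrix (Fin m) (Fin m) ℝ}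
    (hSobs : Sobs.PosDef) (lam : Fin d → ℝ) (y : Fin m → ℝ)
    (hM : IsUnit (Aᵀ * Sobs⁻¹ * A)) {v : Fin d → ℝ} (hv : ∀ i, 0 < v i) (j : Fin d) :
    deriv (fun s => logMixPosterior A Sobs lam y (Function.update v j s)) (v j)
      = -(lam j) - (1/2) * (((Aᵀ * Sobs⁻¹ * A)⁻¹ + Matrix.diagonal v)⁻¹ j j)
        + (1/2) * ((((Aᵀ * Sobs⁻¹ * A)⁻¹ + Matrix.diagonal v)⁻¹.mulVec
            (((Aᵀ * Sobs⁻¹ * A)⁻¹ * Aᵀ * Sobs⁻¹).mulVec y) j)) ^ 2 := by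
  have heq : (fun s => logMixPosterior A Sobs lam y (Function.update v j s))
      =ᶠ[nhds (v j)] (fun s => Ftilde A Sobs lam y (Function.update v j s)) := by
    filter_upwards [eventually_gt_nhds (hv j)] with s hs
    refine logMix_eq_Ftilde A hSobs lam y hM fun i => ?_
    rcases eq_or_ne i j with rfl | hij
    · simpa using hs
    · rw [Function.update_of_ne hij]; exact hv i
  rw [heq.deriv_eq]
  exact (hasDerivAt_Ftilde_update A hSobs lam y hM hv j).deriv

end HessianAux

open HessianAux in
/-- Hessian formula (appendix C.1) of the log posterior mixing density: on the
positive orthant, the second partial derivative `∂²F/∂wᵢ∂w_j` exists and equals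
`½ ([(M⁻¹ + Λ_w)⁻¹]ᵢⱼ)² − zᵢ [(M⁻¹ + Λ_w)⁻¹]ᵢⱼ z_j`
with `z = (M⁻¹ + Λ_w)⁻¹ M⁻¹ AᵀΣ_obs⁻¹ y`; i.e., the Hessian is
`½ ((M⁻¹+Λ_w)⁻¹)^{⊙2} − Λ_z (M⁻¹+Λ_w)⁻¹ Λ_z`. -/
theorem hessian_log_posterior_mixing
    (d m : ℕ) (hd : 0 < d) (hm : 0 < m)
    (A : Matrix (Fin m) (Fin d) ℝ)
    (Sobs : Matrix (Fin m) (Fin m) ℝ) (hSobs : Sobs.PosDef)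
    (y : Fin m → ℝ)
    (hM : IsUnit (Aᵀ * Sobs⁻¹ * A))
    (lam : Fin d → ℝ) (hlam : ∀ i, 0 < lam i) :
    ∀ w : Fin d → ℝ, (∀ i, 0 < w i) → ∀ i j : Fin d,
      HasDerivAt
        (fun t : ℝ =>
          -- the `j`-th partial derivative of `F` at `Function.update w i t`
          deriv (fun s : ℝ =>
              logMixPosterior A Sobs lam y (Function.update (Function.update w i t) j s))
            (Function.update w i t j))
        ((1 / 2) * (((Aᵀ * Sobs⁻¹ * A)⁻¹ + Matrix.diagonal w)⁻¹ i j) ^ 2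
          - (((Aᵀ * Sobs⁻¹ * A)⁻¹ + Matrix.diagonal w)⁻¹
                * (Aᵀ * Sobs⁻¹ * A)⁻¹ * Aᵀ * Sobs⁻¹).mulVec y i
            * (((Aᵀ * Sobs⁻¹ * A)⁻¹ + Matrix.diagonal w)⁻¹ i j)
            * (((Aᵀ * Sobs⁻¹ * A)⁻¹ + Matrix.diagonal w)⁻¹
                * (Aᵀ * Sobs⁻¹ * A)⁻¹ * Aᵀ * Sobs⁻¹).mulVec y j)
        (w i) := by
  intro w hw i j
  have hMpd := M_posDef A hSobs hM
  set M := Aᵀ * Sobs⁻¹ * A with hMdef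
  set c := (M⁻¹ * Aᵀ * Sobs⁻¹).mulVec y with hcdef
  set Nw := M⁻¹ + Matrix.diagonal w with hNdef
  set E := Matrix.single i i (1:ℝ) with hEdef
  have hNpd : Nw.PosDef := N_posDef hMpd hw
  set G := Nw⁻¹ with hGdef
  -- the function we want to differentiate agrees near `w i` with an explicit formula
  have hNfun : ∀ t : ℝ, M⁻¹ + Matrix.diagonal (Function.update w i t)
      = Nw + (t - w i) • E := fun t => by
    rw [diagonal_update, hNdef, add_assoc]
  have hG : HasDerivAt (fun t => (M⁻¹ + Matrix.diagonal (Function.update w i t))⁻¹)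
      (-(G * E * G)) (w i) := by
    simpa only [hNfun] using hasDerivAt_matrix_inv_line Nw hNpd.isUnit E (w i)
  have hentry := hasDerivAt_matrix_entry' hG j j
  have hz := hasDerivAt_mulVec_entry hG c j
  have hP : HasDerivAt (fun t =>
      -(lam j) - (1/2) * ((M⁻¹ + Matrix.diagonal (Function.update w i t))⁻¹ j j)
        + (1/2) * (((M⁻¹ + Matrix.diagonal (Function.update w i t))⁻¹.mulVec c) j) ^ 2)
      (-(1/2) * ((-(G * E * G)) j j)
        + (1/2) * (2 * (((M⁻¹ + Matrix.diagonal (Function.update w i (w i)))⁻¹.mulVec c) j) ^ 1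
            * ((-(G * E * G)).mulVec c j)))
      (w i) := by
    have h1 := ((hasDerivAt_const (w i) (-(lam j))).sub (hentry.const_mul (1/2))).add
      (((hz.pow 2)).const_mul (1/2))
    exact h1.congr_deriv (by norm_num)
  -- identify the derivative value
  have hGsym : Gᵀ = G := Ninv_sym hMpd w
  have hval : -(1/2) * ((-(G * E * G)) j j)
        + (1/2) * (2 * (((M⁻¹ + Matrix.diagonal (Function.update w i (w i)))⁻¹.mulVec c) j) ^ 1
            * ((-(G * E * G)).mulVec c j))
      = (1 / 2) * (G i j) ^ 2
          - (G * M⁻¹ * Aᵀ * Sobs⁻¹).mulVec y i * (G i j) * (G * M⁻¹ * Aᵀ * Sobs⁻¹).mulVec y j := by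
    have e1 : (-(G * E * G)) j j = -(G j i * G i j) := by
      rw [Matrix.neg_apply, hEdef, mul_stdBasis_mul]
    have e2 : (-(G * E * G)).mulVec c j = -(G j i * G.mulVec c i) := by
      rw [Matrix.neg_mulVec, Pi.neg_apply, hEdef, mul_stdBasis_mul_mulVec]
    have e3 : (G * M⁻¹ * Aᵀ * Sobs⁻¹).mulVec y = G.mulVec c := by
      rw [hcdef, Matrix.mulVec_mulVec]
      congr 1
      simp only [Matrix.mul_assoc]
    have e4 : G j i = G i j :=
      (congrFun (congrFun hGsym.symm j) i).trans (Matrix.transpose_apply G j i)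
    have e5 : Function.update w i (w i) = w := Function.update_eq_self i w
    rw [e1, e2, e3, e4, e5, ← hNdef, ← hGdef]
    ring
  rw [hval] at hP
  -- conclude by eventual equality
  refine hP.congr_of_eventuallyEq ?_
  filter_upwards [eventually_gt_nhds (hw i)] with t ht
  have hv' : ∀ k, 0 < Function.update w i t k := fun k => by
    rcases eq_or_ne k i with rfl | hk
    · simpa using ht
    · rw [Function.update_of_ne hk]; exact hw k
  exact deriv_logMix A hSobs lam y hM hv' j
end
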